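/- A simple graph G is trivially perfect if and only if its utter graph u(G) is trivially perfect. -/

import Mathlib

open SimpleGraph

universe u

variable {V : Type u}

/-- The clique number of a graph, as an extended natural number:
the supremum of the cardinalities of its (finite) cliques. -/
noncomputable def cliqueNumber (G : SimpleGraph V) : ℕ∞ :=
  ⨆ (t : Finset V) (_ : G.IsClique (t : Set V)), (t.card : ℕ∞)

/-- A graph is perfect if every induced subgraph has chromatic number equal
to its clique number. -/
def IsPerfect (G : SimpleGraph V) : Prop :=
  ∀ s : Set V, (G.induce s).chromaticNumber = cliqueNumber (G.induce s)

/-- The contraction `G/F` of a set `F` of edges: vertices are the connected components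
of the spanning subgraph `(V, F)`, two distinct components being adjacent iff `G` has
an edge between them. -/
def contractEdges (G : SimpleGraph V) (F : Set (Sym2 V)) :
    SimpleGraph (SimpleGraph.fromEdgeSet F).ConnectedComponent where
  Adj c d := c ≠ d ∧ ∃ x y : V,
      (SimpleGraph.fromEdgeSet F).connectedComponentMk x = c ∧
      (SimpleGraph.fromEdgeSet F).connectedComponentMk y = d ∧ G.Adj x y
  symm := by
    refine ⟨?_⟩
    rintro c d ⟨hne, x, y, hx, hy, hxy⟩
    exact ⟨hne.symm, y, x, hy, hx, hxy.symm⟩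
  loopless := ⟨fun c h => h.1 rfl⟩

/-- A graph is contraction perfect if the contraction of any set of its edges
yields a perfect graph. -/
def IsContractionPerfect (G : SimpleGraph V) : Prop :=
  ∀ F : Set (Sym2 V), F ⊆ G.edgeSet → IsPerfect (contractEdges G F)

/-- `G` contains a hole (induced cycle, `n ≥ 4`) on `n` vertices. -/
def HasHole (G : SimpleGraph V) (n : ℕ) : Prop :=
  4 ≤ n ∧ ∃ s : Set V, Nonempty (G.induce s ≃g cycleGraph n)

/-- `G` contains an antihole (induced complement of a cycle, `n ≥ 4`) on `n` vertices. -/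
def HasAntihole (G : SimpleGraph V) (n : ℕ) : Prop :=
  4 ≤ n ∧ ∃ s : Set V, Nonempty ((G.induce s)ᶜ ≃g cycleGraph n)

/-- `u`, `v` and `w 0, …, w (p-1)` (thought of as `w_1, …, w_p`) form an expanded antihole
in `G`: `uv` is an edge, the `w i` are distinct vertices different from `u` and `v`
inducing an antipath in this order, `u` is adjacent exactly to `w_2, …, w_{p-2}` among them,
and `v` is adjacent exactly to `w_3, …, w_{p-1}` among them. -/
def IsExpandedAntihole (G : SimpleGraph V) (u v : V) (p : ℕ) (w : Fin p → V) : Prop :=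
  6 ≤ p ∧ Even p ∧ G.Adj u v ∧ Function.Injective w ∧
  (∀ i, w i ≠ u) ∧ (∀ i, w i ≠ v) ∧
  (∀ i j, G.Adj (w i) (w j) ↔ (i ≠ j ∧ (i : ℕ) + 1 ≠ (j : ℕ) ∧ (j : ℕ) + 1 ≠ (i : ℕ))) ∧
  (∀ i, G.Adj u (w i) ↔ (1 ≤ (i : ℕ) ∧ (i : ℕ) ≤ p - 3)) ∧
  (∀ i, G.Adj v (w i) ↔ (2 ≤ (i : ℕ) ∧ (i : ℕ) ≤ p - 2))

/-- The contraction `G/uv` of a single edge `uv`: delete `u` and `v` and add a new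
vertex (here `none`) adjacent to every vertex of `N(u) ∪ N(v)`. -/
def contractOne (G : SimpleGraph V) (u v : V) :
    SimpleGraph (Option {x : V // x ≠ u ∧ x ≠ v}) where
  Adj a b :=
    match a, b with
    | some x, some y => G.Adj x.1 y.1
    | some x, none => G.Adj x.1 u ∨ G.Adj x.1 v
    | none, some y => G.Adj u y.1 ∨ G.Adj v y.1
    | none, none => False
  symm := by
    refine ⟨?_⟩
    rintro (_ | x) (_ | y) h
    · exact h
    · exact h.imp (fun h' => h'.symm) (fun h' => h'.symm)
    · exact h.imp (fun h' => h'.symm) (fun h' => h'.symm)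
    · exact h.symm
  loopless := by
    refine ⟨?_⟩
    rintro (_ | x) h
    · exact h
    · exact G.loopless.irrefl _ h

/-- The utter graph of `G`, on vertex set `V(G) ∪ E(G)`. -/
def utterGraph (G : SimpleGraph V) : SimpleGraph (V ⊕ G.edgeSet) where
  Adj a b :=
    match a, b with
    | Sum.inl x, Sum.inl y => G.Adj x y
    | Sum.inl x, Sum.inr e => x ∈ (e : Sym2 V) ∨ ∃ y ∈ (e : Sym2 V), G.Adj x y
    | Sum.inr e, Sum.inl x => x ∈ (e : Sym2 V) ∨ ∃ y ∈ (e : Sym2 V), G.Adj x y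
    | Sum.inr e, Sum.inr f => e ≠ f ∧
        ((∃ x, x ∈ (e : Sym2 V) ∧ x ∈ (f : Sym2 V)) ∨
          ∃ x ∈ (e : Sym2 V), ∃ y ∈ (f : Sym2 V), G.Adj x y)
  symm := by
    refine ⟨?_⟩
    rintro (x | e) (y | f) h
    · exact h.symm
    · exact h
    · exact h
    · exact ⟨h.1.symm, h.2.imp (fun ⟨x, hx⟩ => ⟨x, hx.2, hx.1⟩)
        (fun ⟨x, hx, y, hy, hxy⟩ => ⟨y, hy, x, hx, hxy.symm⟩)⟩
  loopless := by
    refine ⟨?_⟩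
    rintro (x | e) h
    · exact G.loopless.irrefl _ h
    · exact h.1 rfl

/-- A stable (independent) set: a set of pairwise nonadjacent vertices. -/
def IsStableSet (G : SimpleGraph V) (s : Set V) : Prop :=
  ∀ x ∈ s, ∀ y ∈ s, ¬G.Adj x y

/-- A co-2-plex: a set of vertices inducing a subgraph of maximum degree at most one. -/
def IsCo2Plex (G : SimpleGraph V) (S : Set V) : Prop :=
  ∀ x ∈ S, ∀ y ∈ S, ∀ z ∈ S, G.Adj x y → G.Adj x z → y = z

/-- The graph obtained from `G` by adding a true twin (`none`) of the vertex `v`. -/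
def addTrueTwin (G : SimpleGraph V) (v : V) : SimpleGraph (Option V) where
  Adj a b :=
    match a, b with
    | some x, some y => G.Adj x y
    | some x, none => x = v ∨ G.Adj x v
    | none, some y => y = v ∨ G.Adj y v
    | none, none => False
  symm := by refine ⟨?_⟩; rintro (_ | x) (_ | y) h <;> first | exact h | exact h.symm
  loopless := by
    refine ⟨?_⟩
    rintro (_ | x) h
    · exact h
    · exact G.loopless.irrefl _ h

/-- The graph obtained from `G` by adding a false twin (`none`) of the vertex `v`. -/
def addFalseTwin (G : SimpleGraph V) (v : V) : SimpleGraph (Option V) where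
  Adj a b :=
    match a, b with
    | some x, some y => G.Adj x y
    | some x, none => G.Adj x v
    | none, some y => G.Adj y v
    | none, none => False
  symm := by refine ⟨?_⟩; rintro (_ | x) (_ | y) h <;> first | exact h | exact h.symm
  loopless := by
    refine ⟨?_⟩
    rintro (_ | x) h
    · exact h
    · exact G.loopless.irrefl _ h

/-- A trivially perfect graph: no induced path on 4 vertices and no induced cycle on
4 vertices. -/
def IsTriviallyPerfect (G : SimpleGraph V) : Prop :=
  (¬∃ s : Set V, Nonempty (G.induce s ≃g SimpleGraph.pathGraph 4)) ∧
  (¬∃ s : Set V, Nonempty (G.induce s ≃g cycleGraph 4))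

namespace TPAux

open SimpleGraph

variable {W : Type*}

/-- Closed neighborhood as a set. -/
def Nb (G : SimpleGraph W) (x : W) : Set W := {z | z = x ∨ G.Adj x z}

lemma mem_nb {G : SimpleGraph W} {x z : W} : z ∈ Nb G x ↔ z = x ∨ G.Adj x z := Iff.rfl

lemma self_mem_nb {G : SimpleGraph W} (x : W) : x ∈ Nb G x := Or.inl rfl

lemma nb_comm {G : SimpleGraph W} {x z : W} : z ∈ Nb G x ↔ x ∈ Nb G z := by
  simp only [mem_nb, eq_comm, G.adj_comm]

/-- Nested-neighborhood condition at every edge. -/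
def Nested (G : SimpleGraph W) : Prop :=
  ∀ ⦃x y : W⦄, G.Adj x y → Nb G x ⊆ Nb G y ∨ Nb G y ⊆ Nb G x

/-- The bad 4-vertex pattern common to `P₄` and `C₄`. -/
def Bad (G : SimpleGraph W) : Prop :=
  ∃ a b c d : W, G.Adj a b ∧ G.Adj b c ∧ G.Adj c d ∧
    a ≠ c ∧ ¬G.Adj a c ∧ b ≠ d ∧ ¬G.Adj b d

lemma nested_iff_not_bad {G : SimpleGraph W} : Nested G ↔ ¬ Bad G := by
  constructor
  · rintro h ⟨a, b, c, d, hab, hbc, hcd, hac, hnac, hbd, hnbd⟩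
    rcases h hbc with hsub | hsub
    · rcases hsub (Or.inr hab.symm) with rfl | h' 
      · exact hac rfl
      · exact hnac h'.symm
    · rcases hsub (Or.inr hcd) with rfl | h'
      · exact hbd rfl
      · exact hnbd h'
  · intro hnb x y hxy
    by_contra hcon
    push_neg at hcon
    obtain ⟨h1, h2⟩ := hcon
    obtain ⟨a, ha, hna⟩ := Set.not_subset.mp h1
    obtain ⟨d, hd, hnd⟩ := Set.not_subset.mp h2
    rcases ha with rfl | ha
    · exact hna (Or.inr hxy.symm)
    rcases hd with rfl | hd
    · exact hnd (Or.inr hxy)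
    rw [mem_nb] at hna hnd
    push_neg at hna hnd
    exact hnb ⟨a, x, y, d, ha.symm, hxy, hd, hna.1, fun h => hna.2 h.symm,
      hnd.1.symm, hnd.2⟩

end TPAux


namespace TPAux

variable {W : Type*}

lemma induced_of_pattern (G : SimpleGraph W) (H : SimpleGraph (Fin 4)) (f : Fin 4 → W)
    (hinj : Function.Injective f) (hadj : ∀ i j, G.Adj (f i) (f j) ↔ H.Adj i j) :
    ∃ s : Set W, Nonempty (G.induce s ≃g H) := by
  refine ⟨Set.range f, ⟨SimpleGraph.Iso.symm ⟨Equiv.ofInjective f hinj, ?_⟩⟩⟩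
  intro i j
  exact hadj i j

lemma pattern_of_induced (G : SimpleGraph W) (H : SimpleGraph (Fin 4)) (s : Set W)
    (φ : G.induce s ≃g H) :
    ∃ f : Fin 4 → W, Function.Injective f ∧ ∀ i j, G.Adj (f i) (f j) ↔ H.Adj i j := by
  refine ⟨fun i => (φ.symm i : W), ?_, ?_⟩
  · intro i j h
    exact φ.symm.injective (Subtype.ext h)
  · intro i j
    exact φ.symm.map_rel_iff

end TPAux


namespace TPAux

variable {W : Type*}

lemma bad_of_not_tp {G : SimpleGraph W} (h : ¬ IsTriviallyPerfect G) : Bad G := by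
  rw [IsTriviallyPerfect, not_and_or, not_not, not_not] at h
  rcases h with ⟨s, ⟨φ⟩⟩ | ⟨s, ⟨φ⟩⟩
  · obtain ⟨f, hinj, hadj⟩ := pattern_of_induced G _ s φ
    refine ⟨f 0, f 1, f 2, f 3, ?_, ?_, ?_, ?_, ?_, ?_, ?_⟩
    · exact (hadj 0 1).mpr (by rw [pathGraph_adj]; decide)
    · exact (hadj 1 2).mpr (by rw [pathGraph_adj]; decide)
    · exact (hadj 2 3).mpr (by rw [pathGraph_adj]; decide)
    · exact fun h => (by decide : (0 : Fin 4) ≠ 2) (hinj h)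
    · exact fun h => (by rw [pathGraph_adj]; decide : ¬(pathGraph 4).Adj 0 2) ((hadj 0 2).mp h)
    · exact fun h => (by decide : (1 : Fin 4) ≠ 3) (hinj h)
    · exact fun h => (by rw [pathGraph_adj]; decide : ¬(pathGraph 4).Adj 1 3) ((hadj 1 3).mp h)
  · obtain ⟨f, hinj, hadj⟩ := pattern_of_induced G _ s φ
    refine ⟨f 0, f 1, f 2, f 3, ?_, ?_, ?_, ?_, ?_, ?_, ?_⟩
    · exact (hadj 0 1).mpr (by decide)
    · exact (hadj 1 2).mpr (by decide)
    · exact (hadj 2 3).mpr (by decide)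
    · exact fun h => (by decide : (0 : Fin 4) ≠ 2) (hinj h)
    · exact fun h => (by decide : ¬(cycleGraph 4).Adj 0 2) ((hadj 0 2).mp h)
    · exact fun h => (by decide : (1 : Fin 4) ≠ 3) (hinj h)
    · exact fun h => (by decide : ¬(cycleGraph 4).Adj 1 3) ((hadj 1 3).mp h)

lemma not_tp_of_bad {G : SimpleGraph W} (h : Bad G) : ¬ IsTriviallyPerfect G := by
  obtain ⟨a, b, c, d, hab, hbc, hcd, hac, hnac, hbd, hnbd⟩ := h
  have had' : a ≠ d := fun h => hnac (h ▸ hcd.symm)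
  have hinj : Function.Injective ![a, b, c, d] := by
    have h1 : a ≠ b := hab.ne
    have h2 : b ≠ c := hbc.ne
    have h3 : c ≠ d := hcd.ne
    intro i j h
    fin_cases i <;> fin_cases j <;> simp_all [Fin.ext_iff] <;>
      first | rfl | (exact absurd h.symm (by assumption)) | (exact absurd h (by assumption))
  intro htp
  by_cases had : G.Adj a d
  · refine htp.2 (induced_of_pattern G _ ![a,b,c,d] hinj ?_)
    intro i j
    fin_cases i <;> fin_cases j <;> simp_all [cycleGraph_adj, G.adj_comm, Fin.ext_iff] <;> decide
  · refine htp.1 (induced_of_pattern G _ ![a,b,c,d] hinj ?_)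
    intro i j
    fin_cases i <;> fin_cases j <;> simp_all [pathGraph_adj, G.adj_comm, Fin.ext_iff] <;> decide

lemma tp_iff_nested {G : SimpleGraph W} : IsTriviallyPerfect G ↔ Nested G := by
  rw [nested_iff_not_bad]
  constructor
  · exact fun h hb => not_tp_of_bad hb h
  · intro h
    by_contra htp
    exact h (bad_of_not_tp htp)

end TPAux


namespace TPAux

variable {V : Type u}

/-- The set of underlying vertices of a node of the utter graph. -/
def base (G : SimpleGraph V) : V ⊕ G.edgeSet → Set V
  | Sum.inl x => {x}
  | Sum.inr e => {p | p ∈ (e : Sym2 V)}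

/-- The union of closed neighborhoods of the base. -/
def sig (G : SimpleGraph V) (ν : V ⊕ G.edgeSet) : Set V :=
  {z | ∃ w ∈ base G ν, z ∈ Nb G w}

lemma nb_subset_sig {G : SimpleGraph V} {ν : V ⊕ G.edgeSet} {p : V} (hp : p ∈ base G ν) :
    Nb G p ⊆ sig G ν := fun z hz => ⟨p, hp, hz⟩

lemma utter_adj_iff {G : SimpleGraph V} (ν μ : V ⊕ G.edgeSet) :
    (utterGraph G).Adj ν μ ↔ ν ≠ μ ∧ ∃ p ∈ base G μ, p ∈ sig G ν := by
  rcases ν with x | e <;> rcases μ with y | f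
  · show G.Adj x y ↔ _
    constructor
    · intro h
      exact ⟨by simp [h.ne], y, rfl, x, rfl, Or.inr h⟩
    · rintro ⟨hne, p, rfl, w, rfl, rfl | h⟩
      · exact (hne rfl).elim
      · exact h
  · show (x ∈ (f : Sym2 V) ∨ ∃ y ∈ (f : Sym2 V), G.Adj x y) ↔ _
    constructor
    · rintro (h | ⟨y, hy, hxy⟩)
      · exact ⟨by simp, x, h, x, rfl, Or.inl rfl⟩
      · exact ⟨by simp, y, hy, x, rfl, Or.inr hxy⟩
    · rintro ⟨-, p, hp, w, rfl, rfl | h⟩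
      · exact Or.inl hp
      · exact Or.inr ⟨p, hp, h⟩
  · show (y ∈ (e : Sym2 V) ∨ ∃ x ∈ (e : Sym2 V), G.Adj y x) ↔ _
    constructor
    · rintro (h | ⟨x, hx, hxy⟩)
      · exact ⟨by simp, y, rfl, y, h, Or.inl rfl⟩
      · exact ⟨by simp, y, rfl, x, hx, Or.inr hxy.symm⟩
    · rintro ⟨-, p, rfl, w, hw, rfl | h⟩
      · exact Or.inl hw
      · exact Or.inr ⟨w, hw, h.symm⟩
  · show (e ≠ f ∧ _) ↔ _
    constructor
    · rintro ⟨hne, ⟨p, hpe, hpf⟩ | ⟨x, hx, y, hy, hxy⟩⟩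
      · exact ⟨by simpa using hne, p, hpf, p, hpe, Or.inl rfl⟩
      · exact ⟨by simpa using hne, y, hy, x, hx, Or.inr hxy⟩
    · rintro ⟨hne, p, hpf, w, hwe, rfl | h⟩
      · exact ⟨by simpa using hne, Or.inl ⟨p, hwe, hpf⟩⟩
      · exact ⟨by simpa using hne, Or.inr ⟨w, hwe, p, hpf, h⟩⟩

lemma exists_top {G : SimpleGraph V} (hG : Nested G) (ν : V ⊕ G.edgeSet) :
    ∃ w ∈ base G ν, sig G ν = Nb G w := by
  rcases ν with x | e
  · refine ⟨x, rfl, ?_⟩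
    ext z
    constructor
    · rintro ⟨w, rfl, hz⟩
      exact hz
    · intro hz
      exact ⟨x, rfl, hz⟩
  · obtain ⟨⟨u, v⟩, h⟩ := Quot.exists_rep (e : Sym2 V)
    have he : (e : Sym2 V) = s(u, v) := h.symm
    have huv : G.Adj u v := by
      have h2 := e.2
      rw [he] at h2
      exact (SimpleGraph.mem_edgeSet G).mp h2
    have hbase : ∀ p, p ∈ base G (Sum.inr e) ↔ (p = u ∨ p = v) := by
      intro p
      show p ∈ (e : Sym2 V) ↔ _
      rw [he, Sym2.mem_iff]
    rcases hG huv with hsub | hsub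
    · refine ⟨v, (hbase v).mpr (Or.inr rfl), ?_⟩
      ext z
      constructor
      · rintro ⟨w, hw, hz⟩
        rcases (hbase w).mp hw with rfl | rfl
        · exact hsub hz
        · exact hz
      · intro hz
        exact ⟨v, (hbase v).mpr (Or.inr rfl), hz⟩
    · refine ⟨u, (hbase u).mpr (Or.inl rfl), ?_⟩
      ext z
      constructor
      · rintro ⟨w, hw, hz⟩
        rcases (hbase w).mp hw with rfl | rfl
        · exact hz
        · exact hsub hz
      · intro hz
        exact ⟨u, (hbase u).mpr (Or.inl rfl), hz⟩

lemma nbU_mono {G : SimpleGraph V} {ν μ : V ⊕ G.edgeSet}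
    (hadj : (utterGraph G).Adj ν μ) (h : sig G ν ⊆ sig G μ) :
    Nb (utterGraph G) ν ⊆ Nb (utterGraph G) μ := by
  rintro c (rfl | hc)
  · exact Or.inr hadj.symm
  · obtain ⟨hne, p, hp, hpsig⟩ := (utter_adj_iff ν c).mp hc
    by_cases hcμ : c = μ
    · exact Or.inl hcμ
    · exact Or.inr ((utter_adj_iff μ c).mpr ⟨Ne.symm hcμ, p, hp, h hpsig⟩)

lemma nested_utter {G : SimpleGraph V} (hG : Nested G) : Nested (utterGraph G) := by
  intro ν μ hadj
  obtain ⟨wν, hwνb, hν⟩ := exists_top hG ν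
  obtain ⟨wμ, hwμb, hμ⟩ := exists_top hG μ
  obtain ⟨-, p, hpμ, hpν⟩ := (utter_adj_iff ν μ).mp hadj
  have hpNν : p ∈ Nb G wν := hν ▸ hpν
  have hNp : Nb G p ⊆ Nb G wμ := hμ ▸ nb_subset_sig hpμ
  have key : Nb G wν ⊆ Nb G wμ ∨ Nb G wμ ⊆ Nb G wν := by
    rcases hpNν with rfl | hadjp
    · exact Or.inl hNp
    · rcases hG hadjp with h1 | h1
      · exact Or.inl (h1.trans hNp)
      · rcases hNp (nb_comm.mp (Or.inr hadjp)) with rfl | h2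
        · exact Or.inl (le_refl _)
        · exact hG h2.symm
  rcases key with h | h
  · exact Or.inl (nbU_mono hadj (hν ▸ hμ ▸ h))
  · exact Or.inr (nbU_mono hadj.symm (hν ▸ hμ ▸ h))

lemma nested_of_utter {G : SimpleGraph V} (hU : Nested (utterGraph G)) : Nested G := by
  intro x y hxy
  have hadjU : (utterGraph G).Adj (Sum.inl x) (Sum.inl y) := hxy
  rcases hU hadjU with h | h
  · left
    intro z hz
    have : (Sum.inl z : V ⊕ G.edgeSet) ∈ Nb (utterGraph G) (Sum.inl x) := by
      rcases hz with rfl | hz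
      · exact Or.inl rfl
      · exact Or.inr (show (utterGraph G).Adj _ _ from hz)
    rcases h this with h' | h'
    · exact Or.inl (by injection h')
    · exact Or.inr h'
  · right
    intro z hz
    have : (Sum.inl z : V ⊕ G.edgeSet) ∈ Nb (utterGraph G) (Sum.inl y) := by
      rcases hz with rfl | hz
      · exact Or.inl rfl
      · exact Or.inr (show (utterGraph G).Adj _ _ from hz)
    rcases h this with h' | h'
    · exact Or.inl (by injection h')
    · exact Or.inr h'

end TPAux


/-- A graph is trivially perfect iff its utter graph is trivially
perfect. -/
theorem triviallyPerfect_iff_utter_triviallyPerfect {V : Type u} (G : SimpleGraph V) :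
    IsTriviallyPerfect G ↔ IsTriviallyPerfect (utterGraph G) := by
  rw [TPAux.tp_iff_nested, TPAux.tp_iff_nested]
  exact ⟨TPAux.nested_utter, TPAux.nested_of_utter⟩
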